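/- Let $f : \{0,1\}^n \to \{0,1\}$ satisfy $f(\mathbf{0}) = 0$, $f(\mathbf{1}) = 1$, and suppose $f$ is not monotone. Then $f$ has a ternary minor $f'$ satisfying $f'(0,0,0) = 0$, $f'(1,0,0) = 1$, $f'(1,1,0) = 0$, and $f'(1,1,1) = 1$. -/

import Mathlib

theorem nonmonotone_has_zigzag_minor (n : ℕ) (f : (Fin n → Bool) → Bool)
    (h0 : f (fun _ => false) = false) (h1 : f (fun _ => true) = true)
    (hm : ¬ Monotone f) :
    ∃ σ : Fin n → Fin 3,
      f ((![false, false, false] : Fin 3 → Bool) ∘ σ) = false ∧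
      f ((![true, false, false] : Fin 3 → Bool) ∘ σ) = true ∧
      f ((![true, true, false] : Fin 3 → Bool) ∘ σ) = false ∧
      f ((![true, true, true] : Fin 3 → Bool) ∘ σ) = true := by
  rw [Monotone] at hm
  push_neg at hm
  obtain ⟨a, b, hab, hfab⟩ := hm
  have hfa : f a = true := by
    revert hfab; cases h : f a <;> simp [h]
  have hfb : f b = false := by
    revert hfab; cases h : f b <;> simp [h]
  refine ⟨fun i => if a i then 0 else if b i then 1 else 2, ?_, ?_, ?_, ?_⟩
  · convert h0 using 2
    funext i
    simp only [Function.comp]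
    by_cases ha : a i <;> by_cases hb : b i <;> simp [ha, hb]
  · convert hfa using 2
    funext i
    simp only [Function.comp]
    by_cases ha : a i <;> by_cases hb : b i <;> simp [ha, hb]
  · convert hfb using 2
    funext i
    simp only [Function.comp]
    have := hab i
    by_cases ha : a i <;> by_cases hb : b i <;> simp_all <;> exact absurd this (by simp)
  · convert h1 using 2
    funext i
    simp only [Function.comp]
    by_cases ha : a i <;> by_cases hb : b i <;> simp [ha, hb]
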